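/- Let a, b be real numbers with 0 < a ≤ b ≤ 1.3877. Then for every x with 0 < x ≤ 1, the second derivative of the function x ↦ sinh(a·x)/sinh(b·x) at x is nonpositive. -/

import Mathlib

open Real

/-- Helper: a function vanishing (or nonneg) at `0` with nonnegative derivative on
`[0, 1.3877]` is nonnegative there. -/
lemma aux_nonneg {f f' : ℝ → ℝ} (hd : ∀ t : ℝ, HasDerivAt f (f' t) t) (h0 : 0 ≤ f 0)
    (hp : ∀ t : ℝ, 0 ≤ t → t ≤ 1.3877 → 0 ≤ f' t) :
    ∀ s : ℝ, 0 ≤ s → s ≤ 1.3877 → 0 ≤ f s := by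
  intro s hs hsc
  have hm : MonotoneOn f (Set.Icc (0:ℝ) 1.3877) := by
    apply monotoneOn_of_deriv_nonneg (convex_Icc _ _)
    · exact fun t _ => (hd t).continuousAt.continuousWithinAt
    · exact fun t _ => (hd t).differentiableAt.differentiableWithinAt
    · intro t ht
      rw [interior_Icc] at ht
      rw [(hd t).deriv]
      exact hp t ht.1.le ht.2.le
  have h01 : (0:ℝ) ∈ Set.Icc (0:ℝ) 1.3877 := by constructor <;> norm_num
  have hs1 : s ∈ Set.Icc (0:ℝ) 1.3877 := ⟨hs, hsc⟩
  have := hm h01 hs1 hs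
  linarith

lemma sinh_lb1 : ∀ s : ℝ, 0 ≤ s → s ≤ 1.3877 → 0 ≤ sinh s - s := by
  apply aux_nonneg (f' := fun t => cosh t - 1)
  · intro t; exact (Real.hasDerivAt_sinh t).sub (hasDerivAt_id t)
  · simp
  · intro t _ _; linarith [Real.one_le_cosh t]

lemma cosh_lb1 : ∀ s : ℝ, 0 ≤ s → s ≤ 1.3877 → 0 ≤ cosh s - (1 + s^2/2) := by
  apply aux_nonneg (f' := fun t => sinh t - t)
  · intro t
    have hp : HasDerivAt (fun s : ℝ => 1 + s^2/2) t t := by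
      have := ((hasDerivAt_pow 2 t).div_const 2).const_add (1:ℝ)
      refine this.congr_deriv ?_; norm_num
    exact (Real.hasDerivAt_cosh t).sub hp
  · norm_num
  · intro t ht htc; exact sinh_lb1 t ht htc

lemma sinh_lb2 : ∀ s : ℝ, 0 ≤ s → s ≤ 1.3877 → 0 ≤ sinh s - (s + s^3/6) := by
  apply aux_nonneg (f' := fun t => cosh t - (1 + t^2/2))
  · intro t
    have hp : HasDerivAt (fun s : ℝ => s + s^3/6) (1 + t^2/2) t := by
      have := (hasDerivAt_id t).add ((hasDerivAt_pow 3 t).div_const 6)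
      refine this.congr_deriv ?_; norm_num; ring
    exact (Real.hasDerivAt_sinh t).sub hp
  · norm_num
  · intro t ht htc; exact cosh_lb1 t ht htc

lemma cosh_lb2 : ∀ s : ℝ, 0 ≤ s → s ≤ 1.3877 → 0 ≤ cosh s - (1 + s^2/2 + s^4/24) := by
  apply aux_nonneg (f' := fun t => sinh t - (t + t^3/6))
  · intro t
    have hp : HasDerivAt (fun s : ℝ => 1 + s^2/2 + s^4/24) (t + t^3/6) t := by
      have := (((hasDerivAt_pow 2 t).div_const 2).const_add (1:ℝ)).add
        ((hasDerivAt_pow 4 t).div_const 24)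
      refine this.congr_deriv ?_; norm_num; ring
    exact (Real.hasDerivAt_cosh t).sub hp
  · norm_num
  · intro t ht htc; exact sinh_lb2 t ht htc

lemma sinh_lb3 : ∀ s : ℝ, 0 ≤ s → s ≤ 1.3877 → 0 ≤ sinh s - (s + s^3/6 + s^5/120) := by
  apply aux_nonneg (f' := fun t => cosh t - (1 + t^2/2 + t^4/24))
  · intro t
    have hp : HasDerivAt (fun s : ℝ => s + s^3/6 + s^5/120) (1 + t^2/2 + t^4/24) t := by
      have := ((hasDerivAt_id t).add ((hasDerivAt_pow 3 t).div_const 6)).add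
        ((hasDerivAt_pow 5 t).div_const 120)
      refine this.congr_deriv ?_; norm_num; ring
    exact (Real.hasDerivAt_sinh t).sub hp
  · norm_num
  · intro t ht htc; exact cosh_lb2 t ht htc

/-- A crude numerical upper bound for `cosh` on `[0, 1.3877]`. -/
lemma cosh_ub_const : ∀ s : ℝ, 0 ≤ s → s ≤ 1.3877 → cosh s ≤ 2.4 := by
  set C := cosh 1.3877 with hC
  have hmono : ∀ s : ℝ, 0 ≤ s → s ≤ 1.3877 → cosh s ≤ C := by
    intro s hs hsc
    apply Real.cosh_le_cosh.2
    rw [abs_of_nonneg hs, abs_of_nonneg (by norm_num : (0:ℝ) ≤ 1.3877)]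
    exact hsc
  have h2 : ∀ s : ℝ, 0 ≤ s → s ≤ 1.3877 → 0 ≤ C*s - sinh s := by
    apply aux_nonneg (f' := fun t => C - cosh t)
    · intro t
      have hp : HasDerivAt (fun s : ℝ => C*s) C t := by
        have := (hasDerivAt_id t).const_mul C
        refine this.congr_deriv ?_; ring
      exact hp.sub (Real.hasDerivAt_sinh t)
    · simp
    · intro t ht htc; linarith [hmono t ht htc]
  have h3 : ∀ s : ℝ, 0 ≤ s → s ≤ 1.3877 → 0 ≤ 1 + C*s^2/2 - cosh s := by
    apply aux_nonneg (f' := fun t => C*t - sinh t)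
    · intro t
      have hp : HasDerivAt (fun s : ℝ => 1 + C*s^2/2) (C*t) t := by
        have := (((hasDerivAt_pow 2 t).const_mul C).div_const 2).const_add (1:ℝ)
        refine this.congr_deriv ?_; norm_num; ring
      exact hp.sub (Real.hasDerivAt_cosh t)
    · norm_num
    · intro t ht htc; exact h2 t ht htc
  have h4 : ∀ s : ℝ, 0 ≤ s → s ≤ 1.3877 → 0 ≤ s + C*s^3/6 - sinh s := by
    apply aux_nonneg (f' := fun t => 1 + C*t^2/2 - cosh t)
    · intro t
      have hp : HasDerivAt (fun s : ℝ => s + C*s^3/6) (1 + C*t^2/2) t := by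
        have := (hasDerivAt_id t).add (((hasDerivAt_pow 3 t).const_mul C).div_const 6)
        refine this.congr_deriv ?_; norm_num; ring
      exact hp.sub (Real.hasDerivAt_sinh t)
    · norm_num
    · intro t ht htc; exact h3 t ht htc
  have h5 : ∀ s : ℝ, 0 ≤ s → s ≤ 1.3877 → 0 ≤ 1 + s^2/2 + C*s^4/24 - cosh s := by
    apply aux_nonneg (f' := fun t => t + C*t^3/6 - sinh t)
    · intro t
      have hp : HasDerivAt (fun s : ℝ => 1 + s^2/2 + C*s^4/24) (t + C*t^3/6) t := by
        have := (((hasDerivAt_pow 2 t).div_const 2).const_add (1:ℝ)).add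
          (((hasDerivAt_pow 4 t).const_mul C).div_const 24)
        refine this.congr_deriv ?_; norm_num; ring
      exact hp.sub (Real.hasDerivAt_cosh t)
    · norm_num
    · intro t ht htc; exact h4 t ht htc
  have hCval := h5 1.3877 (by norm_num) le_rfl
  rw [← hC] at hCval
  have hC24 : C ≤ 2.4 := by nlinarith [hCval]
  intro s hs hsc
  exact (hmono s hs hsc).trans hC24

lemma sinh_ub1 : ∀ s : ℝ, 0 ≤ s → s ≤ 1.3877 → 0 ≤ 2.4*s - sinh s := by
  apply aux_nonneg (f' := fun t => 2.4 - cosh t)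
  · intro t
    have hp : HasDerivAt (fun s : ℝ => 2.4*s) 2.4 t := by
      have := (hasDerivAt_id t).const_mul (2.4:ℝ)
      refine this.congr_deriv ?_; ring
    exact hp.sub (Real.hasDerivAt_sinh t)
  · simp
  · intro t ht htc; linarith [cosh_ub_const t ht htc]

lemma cosh_ub1 : ∀ s : ℝ, 0 ≤ s → s ≤ 1.3877 → 0 ≤ 1 + 2.4*s^2/2 - cosh s := by
  apply aux_nonneg (f' := fun t => 2.4*t - sinh t)
  · intro t
    have hp : HasDerivAt (fun s : ℝ => 1 + 2.4*s^2/2) (2.4*t) t := by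
      have := (((hasDerivAt_pow 2 t).const_mul (2.4:ℝ)).div_const 2).const_add (1:ℝ)
      refine this.congr_deriv ?_; norm_num; ring
    exact hp.sub (Real.hasDerivAt_cosh t)
  · norm_num
  · intro t ht htc; exact sinh_ub1 t ht htc

lemma sinh_ub2 : ∀ s : ℝ, 0 ≤ s → s ≤ 1.3877 → 0 ≤ s + 2.4*s^3/6 - sinh s := by
  apply aux_nonneg (f' := fun t => 1 + 2.4*t^2/2 - cosh t)
  · intro t
    have hp : HasDerivAt (fun s : ℝ => s + 2.4*s^3/6) (1 + 2.4*t^2/2) t := by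
      have := (hasDerivAt_id t).add (((hasDerivAt_pow 3 t).const_mul (2.4:ℝ)).div_const 6)
      refine this.congr_deriv ?_; norm_num; ring
    exact hp.sub (Real.hasDerivAt_sinh t)
  · norm_num
  · intro t ht htc; exact cosh_ub1 t ht htc

lemma cosh_ub2 : ∀ s : ℝ, 0 ≤ s → s ≤ 1.3877 → 0 ≤ 1 + s^2/2 + 2.4*s^4/24 - cosh s := by
  apply aux_nonneg (f' := fun t => t + 2.4*t^3/6 - sinh t)
  · intro t
    have hp : HasDerivAt (fun s : ℝ => 1 + s^2/2 + 2.4*s^4/24) (t + 2.4*t^3/6) t := by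
      have := (((hasDerivAt_pow 2 t).div_const 2).const_add (1:ℝ)).add
        (((hasDerivAt_pow 4 t).const_mul (2.4:ℝ)).div_const 24)
      refine this.congr_deriv ?_; norm_num; ring
    exact hp.sub (Real.hasDerivAt_cosh t)
  · norm_num
  · intro t ht htc; exact sinh_ub2 t ht htc

lemma sinh_ub3 : ∀ s : ℝ, 0 ≤ s → s ≤ 1.3877 → 0 ≤ s + s^3/6 + 2.4*s^5/120 - sinh s := by
  apply aux_nonneg (f' := fun t => 1 + t^2/2 + 2.4*t^4/24 - cosh t)
  · intro t
    have hp : HasDerivAt (fun s : ℝ => s + s^3/6 + 2.4*s^5/120) (1 + t^2/2 + 2.4*t^4/24) t := by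
      have := ((hasDerivAt_id t).add ((hasDerivAt_pow 3 t).div_const 6)).add
        (((hasDerivAt_pow 5 t).const_mul (2.4:ℝ)).div_const 120)
      refine this.congr_deriv ?_; norm_num; ring
    exact hp.sub (Real.hasDerivAt_sinh t)
  · norm_num
  · intro t ht htc; exact cosh_ub2 t ht htc

lemma cosh_ub3 : ∀ s : ℝ, 0 ≤ s → s ≤ 1.3877 →
    0 ≤ 1 + s^2/2 + s^4/24 + 2.4*s^6/720 - cosh s := by
  apply aux_nonneg (f' := fun t => t + t^3/6 + 2.4*t^5/120 - sinh t)
  · intro t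
    have hp : HasDerivAt (fun s : ℝ => 1 + s^2/2 + s^4/24 + 2.4*s^6/720)
        (t + t^3/6 + 2.4*t^5/120) t := by
      have := ((((hasDerivAt_pow 2 t).div_const 2).const_add (1:ℝ)).add
        ((hasDerivAt_pow 4 t).div_const 24)).add
        (((hasDerivAt_pow 6 t).const_mul (2.4:ℝ)).div_const 720)
      refine this.congr_deriv ?_; norm_num; ring
    exact hp.sub (Real.hasDerivAt_cosh t)
  · norm_num
  · intro t ht htc; exact sinh_ub3 t ht htc

lemma sinh_ub4 : ∀ s : ℝ, 0 ≤ s → s ≤ 1.3877 →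
    0 ≤ s + s^3/6 + s^5/120 + 2.4*s^7/5040 - sinh s := by
  apply aux_nonneg (f' := fun t => 1 + t^2/2 + t^4/24 + 2.4*t^6/720 - cosh t)
  · intro t
    have hp : HasDerivAt (fun s : ℝ => s + s^3/6 + s^5/120 + 2.4*s^7/5040)
        (1 + t^2/2 + t^4/24 + 2.4*t^6/720) t := by
      have := (((hasDerivAt_id t).add ((hasDerivAt_pow 3 t).div_const 6)).add
        ((hasDerivAt_pow 5 t).div_const 120)).add
        (((hasDerivAt_pow 7 t).const_mul (2.4:ℝ)).div_const 5040)
      refine this.congr_deriv ?_; norm_num; ring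
    exact hp.sub (Real.hasDerivAt_sinh t)
  · norm_num
  · intro t ht htc; exact cosh_ub3 t ht htc

lemma cosh_ub4 : ∀ s : ℝ, 0 ≤ s → s ≤ 1.3877 →
    0 ≤ 1 + s^2/2 + s^4/24 + s^6/720 + 2.4*s^8/40320 - cosh s := by
  apply aux_nonneg (f' := fun t => t + t^3/6 + t^5/120 + 2.4*t^7/5040 - sinh t)
  · intro t
    have hp : HasDerivAt (fun s : ℝ => 1 + s^2/2 + s^4/24 + s^6/720 + 2.4*s^8/40320)
        (t + t^3/6 + t^5/120 + 2.4*t^7/5040) t := by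
      have := (((((hasDerivAt_pow 2 t).div_const 2).const_add (1:ℝ)).add
        ((hasDerivAt_pow 4 t).div_const 24)).add
        ((hasDerivAt_pow 6 t).div_const 720)).add
        (((hasDerivAt_pow 8 t).const_mul (2.4:ℝ)).div_const 40320)
      refine this.congr_deriv ?_; norm_num; ring
    exact hp.sub (Real.hasDerivAt_cosh t)
  · norm_num
  · intro t ht htc; exact sinh_ub4 t ht htc

/-- `L1`: `v * cosh v ≤ sinh v * (1 + v²/3 - v⁴/60)` on `(0, 1.3877]`. -/
lemma L1 (v : ℝ) (hv : 0 < v) (hvc : v ≤ 1.3877) :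
    v * cosh v ≤ sinh v * (1 + v^2/3 - v^4/60) := by
  have h1 := cosh_ub4 v hv.le hvc
  have h2 := sinh_lb3 v hv.le hvc
  have hv2 : v^2 ≤ 1.93 := by nlinarith
  have hP : (0:ℝ) ≤ 1 + v^2/3 - v^4/60 := by nlinarith
  have hq : 0 ≤ v^5 * (1/180 - v^2/720 - v^4/5040) := by
    have h5 : (0:ℝ) ≤ v^5 := by positivity
    have : (0:ℝ) ≤ 1/180 - v^2/720 - v^4/5040 := by nlinarith
    exact mul_nonneg h5 this
  nlinarith [mul_nonneg h2 hP, mul_le_mul_of_nonneg_left h1 hv.le]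

/-- `L2`: `cosh s * sinh s - s ≤ sinh² s * (2s/3 - s³/16)` on `(0, 1.3877]`. -/
lemma L2 (s : ℝ) (hs : 0 < s) (hsc : s ≤ 1.3877) :
    cosh s * sinh s - s ≤ (sinh s)^2 * (2*s/3 - s^3/16) := by
  have h1 := cosh_ub3 s hs.le hsc
  have h2 := sinh_ub4 s hs.le hsc
  have h3 := sinh_lb3 s hs.le hsc
  have hs2 : s^2 ≤ 1.93 := by nlinarith
  have hcoef : (0:ℝ) ≤ 2*s/3 - s^3/16 := by nlinarith
  have hsinh0 : (0:ℝ) ≤ sinh s := by nlinarith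
  have hq : 0 ≤ s^5 * (19/720 - (463/75600)*s^2 - (25/12096)*s^4 - (529/3024000)*s^6
      - (239/40320000)*s^8) := by
    have h5 : (0:ℝ) ≤ s^5 := by positivity
    have h4 : s^4 ≤ 1.93^2 := by nlinarith
    have h6 : s^6 ≤ 1.93^3 := by nlinarith
    have h8 : s^8 ≤ 1.93^4 := by nlinarith
    have : (0:ℝ) ≤ 19/720 - (463/75600)*s^2 - (25/12096)*s^4 - (529/3024000)*s^6
        - (239/40320000)*s^8 := by nlinarith
    exact mul_nonneg h5 this
  -- cosh s * sinh s ≤ (upper cosh)*(upper sinh)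
  have hcs : cosh s * sinh s ≤ (1 + s^2/2 + s^4/24 + 2.4*s^6/720) *
      (s + s^3/6 + s^5/120 + 2.4*s^7/5040) := by
    have hc0 : (0:ℝ) < cosh s := Real.cosh_pos s
    nlinarith [mul_nonneg hsinh0 (by linarith : (0:ℝ) ≤ 1 + s^2/2 + s^4/24 + 2.4*s^6/720 - cosh s)]
  -- sinh² s ≥ (lower)²
  have hsq : (s + s^3/6 + s^5/120)^2 ≤ (sinh s)^2 := by
    have hl : (0:ℝ) ≤ s + s^3/6 + s^5/120 := by positivity
    nlinarith
  nlinarith [mul_le_mul_of_nonneg_right hsq hcoef]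

/-- `L4`: the final polynomial inequality. -/
lemma L4 (y z : ℝ) (hz : 0 ≤ z) (hzy : z ≤ y) (hy : y ≤ 1.93) :
    2*(1 + y/3 - y^2/60)*((y/3 - y^2/64) - (z/3 - z^2/64)) ≤ y - z := by
  have hy0 : 0 ≤ y := hz.trans hzy
  have hb : 2*(1 + y/3 - y^2/60)*(1/3 - (y+z)/64) ≤ 1 := by nlinarith
  calc 2*(1 + y/3 - y^2/60)*((y/3 - y^2/64) - (z/3 - z^2/64))
      = (y - z)*(2*(1 + y/3 - y^2/60)*(1/3 - (y+z)/64)) := by ring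
    _ ≤ (y - z)*1 := mul_le_mul_of_nonneg_left hb (by linarith)
    _ = y - z := mul_one _

/-- Monotonicity of `s ↦ s²/3 - s⁴/64 - s·coth(s)` on `(0, 1.3877]`. -/
lemma Kdiff (u v : ℝ) (hu : 0 < u) (huv : u ≤ v) (hv : v ≤ 1.3877) :
    v*cosh v/sinh v - u*cosh u/sinh u ≤ (v^2/3 - v^4/64) - (u^2/3 - u^4/64) := by
  have hasD : ∀ t : ℝ, 0 < t → HasDerivAt (fun s : ℝ => s^2/3 - s^4/64 - s*cosh s/sinh s)
      (2*t/3 - 4*t^3/64 - (((1*cosh t + t*sinh t)*sinh t - t*cosh t*cosh t)/(sinh t)^2)) t := by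
    intro t ht
    have hst : sinh t ≠ 0 := ne_of_gt (by rwa [Real.sinh_pos_iff])
    have hnum : HasDerivAt (fun s : ℝ => s*cosh s) (1*cosh t + t*sinh t) t :=
      (hasDerivAt_id t).mul (Real.hasDerivAt_cosh t)
    have hdiv := hnum.div (Real.hasDerivAt_sinh t) hst
    have hpoly : HasDerivAt (fun s : ℝ => s^2/3 - s^4/64) (2*t/3 - 4*t^3/64) t := by
      have := ((hasDerivAt_pow 2 t).div_const 3).sub ((hasDerivAt_pow 4 t).div_const 64)
      refine this.congr_deriv ?_
      push_cast
      ring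
    exact hpoly.sub hdiv
  have hF : MonotoneOn (fun s : ℝ => s^2/3 - s^4/64 - s*cosh s/sinh s) (Set.Icc u v) := by
    apply monotoneOn_of_deriv_nonneg (convex_Icc u v)
    · exact fun t ht => (hasD t (lt_of_lt_of_le hu ht.1)).continuousAt.continuousWithinAt
    · intro t ht
      rw [interior_Icc] at ht
      exact (hasD t (hu.trans ht.1)).differentiableAt.differentiableWithinAt
    · intro t ht
      rw [interior_Icc] at ht
      have ht0 : 0 < t := hu.trans ht.1
      have htc : t ≤ 1.3877 := le_of_lt (lt_of_lt_of_le ht.2 hv)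
      rw [(hasD t ht0).deriv]
      have hst : 0 < sinh t := by rwa [Real.sinh_pos_iff]
      have hst2 : 0 < (sinh t)^2 := by positivity
      rw [sub_nonneg, div_le_iff₀ hst2]
      have hL2 := L2 t ht0 htc
      nlinarith [Real.cosh_sq_sub_sinh_sq t]
  have hmem1 : u ∈ Set.Icc u v := ⟨le_rfl, huv⟩
  have hmem2 : v ∈ Set.Icc u v := ⟨huv, le_rfl⟩
  have := hF hmem1 hmem2 huv
  simp only [] at this
  linarith

/-- The core inequality, cleared of denominators. -/
lemma core2 (u v : ℝ) (hu : 0 < u) (huv : u ≤ v) (hv : v ≤ 1.3877) :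
    2*(v*cosh v)*((v*cosh v)*sinh u - (u*cosh u)*sinh v) ≤
      (v^2 - u^2)*sinh u*(sinh v)^2 := by
  have hv0 : 0 < v := lt_of_lt_of_le hu huv
  have hsu : 0 < sinh u := by rwa [Real.sinh_pos_iff]
  have hsv : 0 < sinh v := by rwa [Real.sinh_pos_iff]
  set p := u*cosh u/sinh u with hp
  set q := v*cosh v/sinh v with hq
  have hq0 : 0 < q := by
    apply div_pos _ hsv
    exact mul_pos hv0 (Real.cosh_pos v)
  have hcore : 2*q*(q - p) ≤ v^2 - u^2 := by
    rcases le_or_gt q p with hle | hlt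
    · have h1 : 2*q*(q - p) ≤ 0 := mul_nonpos_of_nonneg_of_nonpos (by linarith) (by linarith)
      have h2 : 0 ≤ v^2 - u^2 := by nlinarith
      linarith
    · have hΔ := Kdiff u v hu huv hv
      have hK := L1 v hv0 hv
      have hqb : q ≤ 1 + v^2/3 - v^4/60 := by
        rw [hq, div_le_iff₀ hsv]
        linarith [hK]
      rw [← hp, ← hq] at hΔ
      have hΔ0 : 0 ≤ (v^2/3 - v^4/64) - (u^2/3 - u^4/64) := by linarith
      have hy : v^2 ≤ 1.93 := by nlinarith
      have hz : 0 ≤ u^2 := sq_nonneg u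
      have hzy : u^2 ≤ v^2 := by nlinarith
      have hL4 := L4 (v^2) (u^2) hz hzy hy
      have e1 : (v^2)^2 = v^4 := by ring
      have e2 : (u^2)^2 = u^4 := by ring
      rw [e1, e2] at hL4
      have step1 : 2*q*(q - p) ≤ 2*q*((v^2/3 - v^4/64) - (u^2/3 - u^4/64)) := by
        apply mul_le_mul_of_nonneg_left _ (by linarith : (0:ℝ) ≤ 2*q)
        linarith
      have step2 : 2*q*((v^2/3 - v^4/64) - (u^2/3 - u^4/64)) ≤
          2*(1 + v^2/3 - v^4/60)*((v^2/3 - v^4/64) - (u^2/3 - u^4/64)) := by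
        apply mul_le_mul_of_nonneg_right _ hΔ0
        linarith
      calc 2*q*(q - p) ≤ 2*q*((v^2/3 - v^4/64) - (u^2/3 - u^4/64)) := step1
        _ ≤ 2*(1 + v^2/3 - v^4/60)*((v^2/3 - v^4/64) - (u^2/3 - u^4/64)) := step2
        _ ≤ v^2 - u^2 := hL4
  have hmul := mul_le_mul_of_nonneg_right hcore
    (le_of_lt (by positivity : (0:ℝ) < sinh u * (sinh v)^2))
  have e1 : 2*q*(q - p) * (sinh u * (sinh v)^2) =
      2*(v*cosh v)*((v*cosh v)*sinh u - (u*cosh u)*sinh v) := by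
    rw [hp, hq]
    field_simp
  have e2 : (v^2 - u^2) * (sinh u * (sinh v)^2) = (v^2 - u^2)*sinh u*(sinh v)^2 := by ring
  rw [e1, e2] at hmul
  exact hmul

/-- For `0 < a ≤ b ≤ 1.3877` and `0 < x ≤ 1`, the second derivative of
`x ↦ sinh(a·x)/sinh(b·x)` at `x` is nonpositive. -/
theorem stmt_16 (a b : ℝ) (ha : 0 < a) (hab : a ≤ b) (hb : b ≤ 1.3877) :
    ∀ x : ℝ, 0 < x → x ≤ 1 →
      iteratedDeriv 2 (fun t => sinh (a * t) / sinh (b * t)) x ≤ 0 := by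
  intro x hx hx1
  have hb0 : 0 < b := lt_of_lt_of_le ha hab
  -- first derivative on (0, ∞)
  have hder : ∀ t : ℝ, 0 < t → HasDerivAt (fun t => sinh (a * t) / sinh (b * t))
      ((cosh (a*t)*(a*1)*sinh (b*t) - sinh (a*t)*(cosh (b*t)*(b*1)))/(sinh (b*t))^2) t := by
    intro t ht
    have hsb : sinh (b*t) ≠ 0 := ne_of_gt (by rw [Real.sinh_pos_iff]; positivity)
    have h1 : HasDerivAt (fun s : ℝ => sinh (a*s)) (cosh (a*t)*(a*1)) t :=
      ((hasDerivAt_id t).const_mul a).sinh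
    have h2 : HasDerivAt (fun s : ℝ => sinh (b*s)) (cosh (b*t)*(b*1)) t :=
      ((hasDerivAt_id t).const_mul b).sinh
    exact h1.div h2 hsb
  have hmem : Set.Ioi (0:ℝ) ∈ nhds x := isOpen_Ioi.mem_nhds hx
  have hEq : deriv (fun t => sinh (a * t) / sinh (b * t)) =ᶠ[nhds x]
      (fun t => (cosh (a*t)*(a*1)*sinh (b*t) - sinh (a*t)*(cosh (b*t)*(b*1)))/(sinh (b*t))^2) := by
    filter_upwards [hmem] with t ht
    exact (hder t ht).deriv
  -- second derivative at x
  have hsbx : (0:ℝ) < sinh (b*x) := by rw [Real.sinh_pos_iff]; positivity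
  have hsax : (0:ℝ) < sinh (a*x) := by rw [Real.sinh_pos_iff]; positivity
  have hsb : sinh (b*x) ≠ 0 := ne_of_gt hsbx
  have hf1' : HasDerivAt
      (fun t => (cosh (a*t)*(a*1)*sinh (b*t) - sinh (a*t)*(cosh (b*t)*(b*1)))/(sinh (b*t))^2)
      (((a^2 - b^2)*sinh (a*x)*(sinh (b*x))^3 -
        (a*cosh (a*x)*sinh (b*x) - b*sinh (a*x)*cosh (b*x))*(2*b*sinh (b*x)*cosh (b*x)))
        /((sinh (b*x))^2)^2) x := by
    have hA : HasDerivAt (fun s : ℝ => sinh (a*s)) (cosh (a*x)*(a*1)) x :=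
      ((hasDerivAt_id x).const_mul a).sinh
    have hB : HasDerivAt (fun s : ℝ => sinh (b*s)) (cosh (b*x)*(b*1)) x :=
      ((hasDerivAt_id x).const_mul b).sinh
    have hA' : HasDerivAt (fun s : ℝ => cosh (a*s)) (sinh (a*x)*(a*1)) x :=
      ((hasDerivAt_id x).const_mul a).cosh
    have hB' : HasDerivAt (fun s : ℝ => cosh (b*s)) (sinh (b*x)*(b*1)) x :=
      ((hasDerivAt_id x).const_mul b).cosh
    have hN : HasDerivAt
        (fun t : ℝ => cosh (a*t)*(a*1)*sinh (b*t) - sinh (a*t)*(cosh (b*t)*(b*1)))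
        ((sinh (a*x)*(a*1)*(a*1)*sinh (b*x) + cosh (a*x)*(a*1)*(cosh (b*x)*(b*1))) -
         (cosh (a*x)*(a*1)*(cosh (b*x)*(b*1)) + sinh (a*x)*(sinh (b*x)*(b*1)*(b*1)))) x := by
      have hNa : HasDerivAt (fun t : ℝ => cosh (a*t)*(a*1)*sinh (b*t))
          (sinh (a*x)*(a*1)*(a*1)*sinh (b*x) + cosh (a*x)*(a*1)*(cosh (b*x)*(b*1))) x := by
        have h1 : HasDerivAt (fun t : ℝ => cosh (a*t)*(a*1)) (sinh (a*x)*(a*1)*(a*1)) x :=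
          hA'.mul_const (a*1)
        exact h1.mul hB
      have hNb : HasDerivAt (fun t : ℝ => sinh (a*t)*(cosh (b*t)*(b*1)))
          (cosh (a*x)*(a*1)*(cosh (b*x)*(b*1)) + sinh (a*x)*(sinh (b*x)*(b*1)*(b*1))) x := by
        have h2 : HasDerivAt (fun t : ℝ => cosh (b*t)*(b*1)) (sinh (b*x)*(b*1)*(b*1)) x :=
          hB'.mul_const (b*1)
        exact hA.mul h2
      exact hNa.sub hNb
    have hD : HasDerivAt (fun t : ℝ => (sinh (b*t))^2)
        ((2:ℕ)*(sinh (b*x))^(2-1)*(cosh (b*x)*(b*1))) x := hB.pow 2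
    have hD2 : ((sinh (b*x))^2) ≠ 0 := pow_ne_zero 2 hsb
    have := hN.div hD hD2
    refine this.congr_deriv ?_
    push_cast
    ring
  have h2eq : iteratedDeriv 2 (fun t => sinh (a * t) / sinh (b * t)) x =
      deriv (deriv (fun t => sinh (a * t) / sinh (b * t))) x := by
    rw [show (2:ℕ) = 1 + 1 from rfl, iteratedDeriv_succ, iteratedDeriv_one]
  rw [h2eq, hEq.deriv_eq, hf1'.deriv]
  apply div_nonpos_of_nonpos_of_nonneg _ (by positivity)
  -- numerator is nonpositive
  have hbx : b*x ≤ 1.3877 := by nlinarith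
  have hax : 0 < a*x := by positivity
  have habx : a*x ≤ b*x := by nlinarith
  have hC := core2 (a*x) (b*x) hax habx hbx
  have key : x^2 * ((a^2 - b^2)*sinh (a*x)*(sinh (b*x))^3 -
      (a*cosh (a*x)*sinh (b*x) - b*sinh (a*x)*cosh (b*x))*(2*b*sinh (b*x)*cosh (b*x))) =
      sinh (b*x) * (2*((b*x)*cosh (b*x))*(((b*x)*cosh (b*x))*sinh (a*x) -
        ((a*x)*cosh (a*x))*sinh (b*x)) - ((b*x)^2 - (a*x)^2)*sinh (a*x)*(sinh (b*x))^2) := by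
    ring
  have hprod : sinh (b*x) * (2*((b*x)*cosh (b*x))*(((b*x)*cosh (b*x))*sinh (a*x) -
      ((a*x)*cosh (a*x))*sinh (b*x)) - ((b*x)^2 - (a*x)^2)*sinh (a*x)*(sinh (b*x))^2) ≤ 0 :=
    mul_nonpos_of_nonneg_of_nonpos hsbx.le (by linarith)
  nlinarith [key, hprod, mul_pos hx hx]
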